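/- arXiv:2112.04355 — 5 statements merged into one kernel-verified Lean document; each statement's English description precedes it below -/
import Mathlib

section
/- Fix positive integers p, q, N, L and set m = p + q. For k = 0, …, N−1 let D(k) ∈ ℝ^{L×m} be the data matrix whose ℓ-th row is the concatenated state-control sample [x_ℓ(k)ᵀ u_ℓ(k)ᵀ], let λ_1, …, λ_{N-1} > 0, let V = blockdiag(D(0), …, D(N−1)), let F be the block forward-difference matrix, Υ = diag(λ_1 I_m, …, λ_{N-1} I_m), and 𝒜 = VᵀV + FᵀΥF. If there exist m = p + q pairs (ℓ, k) ∈ {1, …, L} × {0, …, N−1} such that the corresponding m rows [x_ℓ(k)ᵀ u_ℓ(k)ᵀ] of the matrices D(k) are linearly independent, then 𝒜 is invertible. -/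
open Matrix

/-- The `(N−1)m × Nm` block forward-difference matrix `F` (here `N = n + 1`):
`(Fη)(k) = η(k) − η(k−1)`. -/
def Fmat (n m : ℕ) : Matrix (Fin n × Fin m) (Fin (n + 1) × Fin m) ℝ :=
  fun r c =>
    (if c.1 = r.1.succ then (1 : ℝ) else if c.1 = r.1.castSucc then (-1 : ℝ) else 0) *
      (if r.2 = c.2 then (1 : ℝ) else 0)

/-- The block-diagonal weight matrix `Υ = diag(λ_1 I_m, …, λ_{N-1} I_m)`. -/
def Ups (n m : ℕ) (lam : Fin n → ℝ) : Matrix (Fin n × Fin m) (Fin n × Fin m) ℝ :=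
  fun r c => if r = c then lam r.1 else 0

/-- The data matrix `D(k) ∈ ℝ^{L×(p+q)}` whose `ℓ`-th row is the concatenated state-control
sample `[x_ℓ(k)ᵀ u_ℓ(k)ᵀ]`. -/
def Dmat (p q n L : ℕ) (x : Fin L → Fin (n + 1) → Fin p → ℝ)
    (u : Fin L → Fin (n + 1) → Fin q → ℝ) (k : Fin (n + 1)) :
    Matrix (Fin L) (Fin (p + q)) ℝ :=
  fun ℓ => Fin.append (x ℓ k) (u ℓ k)

/-- The block-diagonal data matrix `V = blockdiag(D(0), …, D(N−1))`. -/
def Vblk (p q n L : ℕ) (x : Fin L → Fin (n + 1) → Fin p → ℝ)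
    (u : Fin L → Fin (n + 1) → Fin q → ℝ) :
    Matrix (Fin (n + 1) × Fin L) (Fin (n + 1) × Fin (p + q)) ℝ :=
  fun r c => if r.1 = c.1 then Dmat p q n L x u r.1 r.2 c.2 else 0

lemma Fmul (n m : ℕ) (z : Fin (n+1) × Fin m → ℝ) (r : Fin n × Fin m) :
    (Fmat n m *ᵥ z) r = z (r.1.succ, r.2) - z (r.1.castSucc, r.2) := by
  have hne : r.1.succ ≠ r.1.castSucc := (Fin.castSucc_lt_succ : r.1.castSucc < r.1.succ).ne'
  simp only [mulVec, dotProduct, Fmat, Fintype.sum_prod_type, mul_assoc, mul_ite, mul_one,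
    mul_zero, ite_mul, one_mul, neg_mul, zero_mul, Finset.sum_ite_eq, Finset.mem_univ, if_true]
  rw [Finset.sum_eq_add_of_mem r.1.succ r.1.castSucc (Finset.mem_univ _) (Finset.mem_univ _) hne]
  · rw [sub_eq_add_neg]; simp [hne, hne.symm]
  · intro c _ hc
    simp [hc.1, hc.2]

lemma Umul (n m : ℕ) (lam : Fin n → ℝ) (y : Fin n × Fin m → ℝ) (r : Fin n × Fin m) :
    (Ups n m lam *ᵥ y) r = lam r.1 * y r := by
  simp [Ups, mulVec, dotProduct, ite_mul, zero_mul]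

lemma Vmul (p q n L : ℕ) (x : Fin L → Fin (n + 1) → Fin p → ℝ)
    (u : Fin L → Fin (n + 1) → Fin q → ℝ) (z : Fin (n+1) × Fin (p+q) → ℝ)
    (r : Fin (n+1) × Fin L) :
    (Vblk p q n L x u *ᵥ z) r = ∑ j, Dmat p q n L x u r.1 r.2 j * z (r.1, j) := by
  simp [Vblk, mulVec, dotProduct, Fintype.sum_prod_type, ite_mul, zero_mul, Finset.sum_ite_eq]

/-- (Theorem 2 of the paper.)  With `m = p + q`, `V = blockdiag(D(k))`,
`F` the block forward-difference matrix, `Υ` the block weight matrix with all `λ_k > 0`,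
and `𝒜 = VᵀV + FᵀΥF`: if there exist `p + q` pairs `(ℓ, k)` such that the corresponding
rows `[x_ℓ(k)ᵀ u_ℓ(k)ᵀ]` are linearly independent, then `𝒜` is invertible. -/
theorem stmt_7 (p q n L : ℕ) (hp : 0 < p) (hq : 0 < q) (hL : 0 < L)
    (x : Fin L → Fin (n + 1) → Fin p → ℝ) (u : Fin L → Fin (n + 1) → Fin q → ℝ)
    (lam : Fin n → ℝ) (hlam : ∀ k, 0 < lam k)
    (hind : ∃ sel : Fin (p + q) → Fin L × Fin (n + 1),
      LinearIndependent ℝ (fun j => Fin.append (x (sel j).1 (sel j).2) (u (sel j).1 (sel j).2))) :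
    IsUnit ((Vblk p q n L x u)ᵀ * Vblk p q n L x u +
      (Fmat n (p + q))ᵀ * Ups n (p + q) lam * Fmat n (p + q)) := by
  obtain ⟨sel, hsel⟩ := hind
  rw [← Matrix.mulVec_injective_iff_isUnit]
  suffices key : ∀ z, ((Vblk p q n L x u)ᵀ * Vblk p q n L x u + (Fmat n (p+q))ᵀ * Ups n (p+q) lam * Fmat n (p+q)) *ᵥ z = 0 → z = 0 by
    intro z1 z2 h12
    have : ((Vblk p q n L x u)ᵀ * Vblk p q n L x u + (Fmat n (p+q))ᵀ * Ups n (p+q) lam * Fmat n (p+q)) *ᵥ (z1 - z2) = 0 := by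
      rw [mulVec_sub, h12, sub_self]
    exact sub_eq_zero.mp (key _ this)
  intro z hz
  -- the quadratic form vanishes
  have hq0 : (Vblk p q n L x u *ᵥ z) ⬝ᵥ (Vblk p q n L x u *ᵥ z) + (Fmat n (p+q) *ᵥ z) ⬝ᵥ (Ups n (p+q) lam *ᵥ (Fmat n (p+q) *ᵥ z)) = 0 := by
    have h := congrArg (fun w => z ⬝ᵥ w) hz
    simp only [dotProduct_zero, add_mulVec, dotProduct_add, ← mulVec_mulVec,
      dotProduct_mulVec, vecMul_transpose] at h
    simpa [dotProduct_mulVec, vecMul_transpose] using h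
  have ht2 : (Fmat n (p+q) *ᵥ z) ⬝ᵥ (Ups n (p+q) lam *ᵥ (Fmat n (p+q) *ᵥ z)) = ∑ r, lam r.1 * ((Fmat n (p+q) *ᵥ z) r)^2 := by
    simp only [dotProduct]
    exact Finset.sum_congr rfl (fun r _ => by rw [Umul]; ring)
  have h1nn : 0 ≤ (Vblk p q n L x u *ᵥ z) ⬝ᵥ (Vblk p q n L x u *ᵥ z) :=
    Finset.sum_nonneg fun i _ => mul_self_nonneg _
  have h2nn : 0 ≤ ∑ r, lam r.1 * ((Fmat n (p+q) *ᵥ z) r)^2 :=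
    Finset.sum_nonneg fun r _ => mul_nonneg (hlam r.1).le (sq_nonneg _)
  rw [ht2] at hq0
  have h1 : (Vblk p q n L x u *ᵥ z) ⬝ᵥ (Vblk p q n L x u *ᵥ z) = 0 := le_antisymm (by linarith) h1nn
  have h2 : ∑ r, lam r.1 * ((Fmat n (p+q) *ᵥ z) r)^2 = 0 := by linarith
  have hVz : Vblk p q n L x u *ᵥ z = 0 := dotProduct_self_eq_zero.mp h1
  have hFz : ∀ r, (Fmat n (p+q) *ᵥ z) r = 0 := by
    intro r
    have := (Finset.sum_eq_zero_iff_of_nonneg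
      (fun r _ => mul_nonneg (hlam r.1).le (sq_nonneg ((Fmat n (p+q) *ᵥ z) r)))).mp h2 r (Finset.mem_univ r)
    have hl := (hlam r.1).ne'
    have : ((Fmat n (p+q) *ᵥ z) r)^2 = 0 := by
      rcases mul_eq_zero.mp this with h | h
      · exact absurd h hl
      · exact h
    exact pow_eq_zero_iff (by norm_num) |>.mp this
  -- z is constant in k
  have hconst : ∀ (k : Fin (n+1)) (j : Fin (p+q)), z (k, j) = z (0, j) := by
    intro k j
    induction k using Fin.induction with
    | zero => rfl
    | succ i ih =>
      have := hFz (i, j)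
      rw [Fmul] at this
      simp only at this
      have hstep : z (i.succ, j) = z (i.castSucc, j) := by linarith [sub_eq_zero.mp this]
      rw [hstep]
      exact ih
  set c : Fin (p+q) → ℝ := fun j => z (0, j) with hc
  -- the square matrix of selected rows
  set M : Matrix (Fin (p+q)) (Fin (p+q)) ℝ :=
    fun i => Fin.append (x (sel i).1 (sel i).2) (u (sel i).1 (sel i).2) with hM
  have hMunit : IsUnit M := Matrix.linearIndependent_rows_iff_isUnit.mp (by exact hsel)
  have hMc : M *ᵥ c = 0 := by
    funext i
    have h0 : (Vblk p q n L x u *ᵥ z) ((sel i).2, (sel i).1) = 0 := by rw [hVz]; rfl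
    rw [Vmul] at h0
    simp only [Pi.zero_apply]
    rw [show (M *ᵥ c) i = ∑ j, Dmat p q n L x u (sel i).2 (sel i).1 j * c j from rfl]
    rw [← h0]
    exact Finset.sum_congr rfl fun j _ => by rw [hconst (sel i).2 j]
  have hc0 : c = 0 := by
    have := Matrix.mulVec_injective_iff_isUnit.mpr hMunit
    have h := this (a₁ := c) (a₂ := 0) (by rw [hMc, mulVec_zero])
    exact h
  funext r
  have : z (r.1, r.2) = c r.2 := hconst r.1 r.2
  simp only [hc0, Pi.zero_apply] at this
  simpa using this
end

section
/- Fix positive integers p, q, N, L and set m = p + q. Let D(k) ∈ ℝ^{L×m} (k = 0, …, N−1) be data matrices, X'(k) ∈ ℝ^{p×L} target matrices, λ_1, …, λ_{N-1} > 0, and define the cost f(C) = ½ Σ_{k=0}^{N−1} ‖D(k) C(k) − X'(k)ᵀ‖_F² + ½ Σ_{k=1}^{N−1} λ_k ‖C(k) − C(k−1)‖_F² for C = (C(0), …, C(N−1)) with each C(k) ∈ ℝ^{m×p}. Then f has a unique global minimizer if and only if the m×m matrix Σ_{k=0}^{N−1} D(k)ᵀ D(k) is positive definite. -/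
open Matrix

/-- The squared Frobenius norm `‖M‖_F² = Σ_{i,j} M_{ij}²` of a real matrix. -/
def frobSq {α β : Type*} [Fintype α] [Fintype β] (M : Matrix α β ℝ) : ℝ :=
  ∑ i, ∑ j, (M i j) ^ 2

/-- The regularized least-squares identification cost
`f(C) = ½ Σ_{k=0}^{N−1} ‖D(k) C(k) − X'(k)ᵀ‖_F² + ½ Σ_{k=1}^{N−1} λ_k ‖C(k) − C(k−1)‖_F²`
(here `N = n + 1`). -/
noncomputable def cost (p q n L : ℕ) (D : Fin (n + 1) → Matrix (Fin L) (Fin (p + q)) ℝ)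
    (X' : Fin (n + 1) → Matrix (Fin p) (Fin L) ℝ) (lam : Fin n → ℝ)
    (C : Fin (n + 1) → Matrix (Fin (p + q)) (Fin p) ℝ) : ℝ :=
  (1 / 2) * ∑ k : Fin (n + 1), frobSq (D k * C k - (X' k)ᵀ) +
    (1 / 2) * ∑ k : Fin n, lam k * frobSq (C k.succ - C k.castSucc)

/-- Unique global minimizer of a least-squares problem iff the linear map is injective. -/
lemma uniqueMin_iff_injective {V W : Type*} [AddCommGroup V] [Module ℝ V]
    [NormedAddCommGroup W] [InnerProductSpace ℝ W] [FiniteDimensional ℝ W]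
    (T : V →ₗ[ℝ] W) (b : W) :
    (∃! x : V, ∀ y : V, ‖T x - b‖ ≤ ‖T y - b‖) ↔ Function.Injective T := by
  constructor
  · rintro ⟨x, hx, hx'⟩ v v' hvv
    have h2 : ∀ y, ‖T (x + (v - v')) - b‖ ≤ ‖T y - b‖ := by
      intro y
      have : T (x + (v - v')) = T x := by
        rw [map_add, map_sub, hvv]; abel
      rw [this]; exact hx y
    have h3 := hx' _ h2
    have h4 : v - v' = 0 := by
      have := congrArg (fun z => z - x) h3
      simpa using this
    exact sub_eq_zero.mp h4
  · intro hT
    set K := LinearMap.range T with hK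
    obtain ⟨x, hx⟩ := (K.orthogonalProjection b).2
    have hperp : b - (K.orthogonalProjection b : W) ∈ Kᗮ :=
      Submodule.sub_starProjection_mem_orthogonal (K := K) b
    have pyth : ∀ w ∈ K, ‖b - w‖ ^ 2 =
        ‖b - (K.orthogonalProjection b : W)‖ ^ 2 +
          ‖(K.orthogonalProjection b : W) - w‖ ^ 2 := by
      intro w hw
      have h0 : inner ℝ (b - (K.orthogonalProjection b : W))
          ((K.orthogonalProjection b : W) - w) = (0 : ℝ) := by
        rw [real_inner_comm]
        exact hperp _ (K.sub_mem (K.orthogonalProjection b).2 hw)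
      have h1 := norm_add_sq_real (b - (K.orthogonalProjection b : W))
        ((K.orthogonalProjection b : W) - w)
      rw [h0, sub_add_sub_cancel] at h1
      linarith
    refine ⟨x, ?_, ?_⟩
    · intro y
      have h1 := pyth (T y) (LinearMap.mem_range_self T y)
      have h2 : ‖T x - b‖ = ‖b - (K.orthogonalProjection b : W)‖ := by
        rw [hx, norm_sub_rev]
      rw [h2, show ‖T y - b‖ = ‖b - T y‖ from norm_sub_rev _ _]
      nlinarith [norm_nonneg (b - T y), norm_nonneg (b - (K.orthogonalProjection b : W)),
        sq_nonneg ‖(K.orthogonalProjection b : W) - T y‖]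
    · intro x' hx'
      have h1 := pyth (T x') (LinearMap.mem_range_self T x')
      have h2 : ‖T x' - b‖ ≤ ‖T x - b‖ := hx' x
      have h3 : ‖T x - b‖ = ‖b - (K.orthogonalProjection b : W)‖ := by
        rw [hx, norm_sub_rev]
      rw [h3, show ‖T x' - b‖ = ‖b - T x'‖ from norm_sub_rev _ _] at h2
      have h4 : ‖(K.orthogonalProjection b : W) - T x'‖ = 0 := by
        nlinarith [norm_nonneg (b - T x'), norm_nonneg (b - (K.orthogonalProjection b : W)),
          norm_nonneg ((K.orthogonalProjection b : W) - T x')]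
      have h5 : T x' = (K.orthogonalProjection b : W) :=
        (sub_eq_zero.mp (norm_eq_zero.mp h4)).symm
      exact hT (h5.trans hx.symm)


/-- Index type for the stacked least-squares formulation. -/
abbrev lsIdx (p q n L : ℕ) : Type :=
  (Fin (n + 1) × Fin L × Fin p) ⊕ (Fin n × Fin (p + q) × Fin p)

/-- The stacked linear map of the least-squares problem. -/
noncomputable def Tmap (p q n L : ℕ) (D : Fin (n + 1) → Matrix (Fin L) (Fin (p + q)) ℝ)
    (lam : Fin n → ℝ) :
    (Fin (n + 1) → Matrix (Fin (p + q)) (Fin p) ℝ) →ₗ[ℝ] EuclideanSpace ℝ (lsIdx p q n L) where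
  toFun C := WithLp.toLp 2 (Sum.elim (fun t => (D t.1 * C t.1) t.2.1 t.2.2)
    (fun t => Real.sqrt (lam t.1) * ((C t.1.succ - C t.1.castSucc) t.2.1 t.2.2)))
  map_add' C C' := by
    ext j
    rcases j with ⟨k, l, i⟩ | ⟨k, a, i⟩ <;>
      simp [Matrix.mul_add, Matrix.add_apply, Matrix.sub_apply] <;> ring
  map_smul' c C := by
    ext j
    rcases j with ⟨k, l, i⟩ | ⟨k, a, i⟩ <;>
      simp [Matrix.mul_smul, Matrix.smul_apply, Matrix.sub_apply, smul_eq_mul] <;> ring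

/-- The stacked target vector. -/
noncomputable def bvec (p q n L : ℕ) (X' : Fin (n + 1) → Matrix (Fin p) (Fin L) ℝ) :
    EuclideanSpace ℝ (lsIdx p q n L) :=
  WithLp.toLp 2 (Sum.elim (fun t => X' t.1 t.2.2 t.2.1) (fun _ => 0))

lemma euclid_norm_sq {ι : Type*} [Fintype ι] (v : EuclideanSpace ℝ ι) :
    ‖v‖ ^ 2 = ∑ i, (v i) ^ 2 := by
  rw [EuclideanSpace.norm_eq, Real.sq_sqrt (Finset.sum_nonneg fun i _ => sq_nonneg _)]
  simp [Real.norm_eq_abs, sq_abs]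

lemma cost_eq_norm (p q n L : ℕ) (D : Fin (n + 1) → Matrix (Fin L) (Fin (p + q)) ℝ)
    (X' : Fin (n + 1) → Matrix (Fin p) (Fin L) ℝ) (lam : Fin n → ℝ) (hlam : ∀ k, 0 < lam k)
    (C : Fin (n + 1) → Matrix (Fin (p + q)) (Fin p) ℝ) :
    cost p q n L D X' lam C = (1 / 2) * ‖Tmap p q n L D lam C - bvec p q n L X'‖ ^ 2 := by
  rw [euclid_norm_sq, Fintype.sum_sum_type]
  have hA : (∑ t : Fin (n + 1) × Fin L × Fin p,
        ((Tmap p q n L D lam C - bvec p q n L X') (Sum.inl t)) ^ 2)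
      = ∑ k : Fin (n + 1), frobSq (D k * C k - (X' k)ᵀ) := by
    rw [Fintype.sum_prod_type]
    refine Finset.sum_congr rfl fun k _ => ?_
    rw [Fintype.sum_prod_type]
    unfold frobSq
    refine Finset.sum_congr rfl fun l _ => Finset.sum_congr rfl fun i _ => ?_
    simp [Tmap, bvec, Matrix.sub_apply, Matrix.transpose_apply]
  have hB : (∑ t : Fin n × Fin (p + q) × Fin p,
        ((Tmap p q n L D lam C - bvec p q n L X') (Sum.inr t)) ^ 2)
      = ∑ k : Fin n, lam k * frobSq (C k.succ - C k.castSucc) := by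
    rw [Fintype.sum_prod_type]
    refine Finset.sum_congr rfl fun k _ => ?_
    unfold frobSq
    rw [Finset.mul_sum, Fintype.sum_prod_type]
    refine Finset.sum_congr rfl fun a _ => ?_
    rw [Finset.mul_sum]
    refine Finset.sum_congr rfl fun i _ => ?_
    have h1 : (Tmap p q n L D lam C - bvec p q n L X') (Sum.inr (k, a, i))
        = Real.sqrt (lam k) * ((C k.succ - C k.castSucc) a i) := by
      simp [Tmap, bvec]
    rw [h1, mul_pow, Real.sq_sqrt (hlam k).le]
  rw [hA, hB]
  unfold cost
  ring

lemma dot_sum_eq (p q n L : ℕ) (D : Fin (n + 1) → Matrix (Fin L) (Fin (p + q)) ℝ)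
    (x : Fin (p + q) → ℝ) :
    x ⬝ᵥ ((∑ k : Fin (n + 1), (D k)ᵀ * D k) *ᵥ x)
      = ∑ k : Fin (n + 1), ∑ l : Fin L, ((D k *ᵥ x) l) ^ 2 := by
  have h1 : (∑ k : Fin (n + 1), (D k)ᵀ * D k) *ᵥ x
      = ∑ k : Fin (n + 1), ((D k)ᵀ * D k) *ᵥ x := by
    ext l
    simp only [Matrix.mulVec, dotProduct, Matrix.sum_apply, Finset.sum_apply, Finset.sum_mul]
    exact Finset.sum_comm
  rw [h1]
  have h3 : x ⬝ᵥ (∑ k : Fin (n + 1), (((D k)ᵀ * D k) *ᵥ x))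
      = ∑ k : Fin (n + 1), x ⬝ᵥ (((D k)ᵀ * D k) *ᵥ x) := by
    simp only [dotProduct, Finset.sum_apply, Finset.mul_sum]
    exact Finset.sum_comm
  rw [h3]
  refine Finset.sum_congr rfl fun k _ => ?_
  rw [← Matrix.mulVec_mulVec, Matrix.dotProduct_mulVec, Matrix.vecMul_transpose]
  simp [dotProduct, pow_two]

/-- (Theorem 1 of the paper.)  The regularized least-squares identification
cost `f` has a unique global minimizer iff the `(p+q) × (p+q)` matrix
`Σ_{k=0}^{N−1} D(k)ᵀ D(k)` is positive definite. -/
theorem stmt_8 (p q n L : ℕ) (hp : 0 < p) (hq : 0 < q) (hL : 0 < L)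
    (D : Fin (n + 1) → Matrix (Fin L) (Fin (p + q)) ℝ)
    (X' : Fin (n + 1) → Matrix (Fin p) (Fin L) ℝ)
    (lam : Fin n → ℝ) (hlam : ∀ k, 0 < lam k) :
    (∃! C : Fin (n + 1) → Matrix (Fin (p + q)) (Fin p) ℝ,
      ∀ C' : Fin (n + 1) → Matrix (Fin (p + q)) (Fin p) ℝ,
        cost p q n L D X' lam C ≤ cost p q n L D X' lam C') ↔
    (∑ k : Fin (n + 1), (D k)ᵀ * D k).PosDef := by
  classical
  have hcost : ∀ C C' : Fin (n + 1) → Matrix (Fin (p + q)) (Fin p) ℝ,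
      (cost p q n L D X' lam C ≤ cost p q n L D X' lam C') ↔
        ‖Tmap p q n L D lam C - bvec p q n L X'‖ ≤
          ‖Tmap p q n L D lam C' - bvec p q n L X'‖ := by
    intro C C'
    rw [cost_eq_norm p q n L D X' lam hlam, cost_eq_norm p q n L D X' lam hlam]
    constructor
    · intro h
      have h2 := (mul_le_mul_iff_right₀ (by norm_num : (0:ℝ) < 1/2)).mp h
      exact (pow_le_pow_iff_left₀ (norm_nonneg _) (norm_nonneg _) two_ne_zero).mp h2
    · intro h
      exact (mul_le_mul_iff_right₀ (by norm_num : (0:ℝ) < 1/2)).mpr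
        (pow_le_pow_left₀ (norm_nonneg _) h 2)
  rw [existsUnique_congr fun C => forall_congr' fun C' => hcost C C',
    uniqueMin_iff_injective (Tmap p q n L D lam) (bvec p q n L X')]
  constructor
  · intro hI
    rw [Matrix.posDef_iff_dotProduct_mulVec]
    constructor
    · unfold Matrix.IsHermitian
      ext i j
      simp only [Matrix.conjTranspose_apply, Matrix.sum_apply, Matrix.mul_apply,
        Matrix.transpose_apply, star_trivial]
      exact Finset.sum_congr rfl fun k _ => Finset.sum_congr rfl fun l _ => mul_comm _ _
    · intro x hx
      rw [star_trivial, dot_sum_eq]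
      by_contra hle
      push_neg at hle
      have hnn : 0 ≤ ∑ k : Fin (n + 1), ∑ l : Fin L, ((D k *ᵥ x) l) ^ 2 :=
        Finset.sum_nonneg fun k _ => Finset.sum_nonneg fun l _ => sq_nonneg _
      have hzero : ∀ k l, (D k *ᵥ x) l = 0 := by
        intro k l
        have h0 : ∑ k : Fin (n + 1), ∑ l : Fin L, ((D k *ᵥ x) l) ^ 2 = 0 :=
          le_antisymm hle hnn
        have h1 := (Finset.sum_eq_zero_iff_of_nonneg
          (fun k _ => Finset.sum_nonneg fun l _ => sq_nonneg ((D k *ᵥ x) l))).mp h0 k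
          (Finset.mem_univ k)
        have h2 := (Finset.sum_eq_zero_iff_of_nonneg
          (fun l _ => sq_nonneg ((D k *ᵥ x) l))).mp h1 l (Finset.mem_univ l)
        exact pow_eq_zero_iff two_ne_zero |>.mp h2
      set C0 : Fin (n + 1) → Matrix (Fin (p + q)) (Fin p) ℝ :=
        fun _ => Matrix.of fun a _ => x a with hC0
      have hT0 : Tmap p q n L D lam C0 = Tmap p q n L D lam 0 := by
        rw [map_zero]
        ext j
        rcases j with ⟨k, l, i⟩ | ⟨k, a, i⟩
        · have : (D k * C0 k) l i = (D k *ᵥ x) l := by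
            simp [hC0, Matrix.mul_apply, Matrix.mulVec, dotProduct]
          simp [Tmap, this, hzero k l]
        · simp [Tmap, hC0]
      have hC00 := hI hT0
      obtain ⟨a, ha⟩ := Function.ne_iff.mp hx
      have := congrFun (congrFun (congrFun hC00 0) a) ⟨0, hp⟩
      simp [hC0] at this
      exact ha this
  · intro hPD
    rw [injective_iff_map_eq_zero]
    intro C hC
    have hcoord : ∀ j, Tmap p q n L D lam C j = 0 := fun j => by simp [hC]
    have hstep : ∀ k : Fin n, C k.succ = C k.castSucc := by
      intro k
      ext a i
      have h := hcoord (Sum.inr (k, a, i))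
      simp only [Tmap, LinearMap.coe_mk, AddHom.coe_mk, PiLp.toLp_apply, Sum.elim_inr] at h
      rcases mul_eq_zero.mp h with h' | h'
      · exact absurd h' (Real.sqrt_ne_zero'.mpr (hlam k))
      · have := sub_eq_zero.mp (by simpa [Matrix.sub_apply] using h')
        exact this
    have hconst : ∀ k, C k = C 0 := by
      intro k
      induction k using Fin.induction with
      | zero => rfl
      | succ i ih => rw [hstep i, ih]
    have hcol : ∀ i : Fin p, (fun a => C 0 a i) = 0 := by
      intro i
      by_contra hne
      have hpos := (Matrix.posDef_iff_dotProduct_mulVec.mp hPD).2 hne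
      rw [star_trivial, dot_sum_eq] at hpos
      have hz : ∀ k l, (D k *ᵥ fun a => C 0 a i) l = 0 := by
        intro k l
        have h := hcoord (Sum.inl (k, l, i))
        simp only [Tmap, LinearMap.coe_mk, AddHom.coe_mk, PiLp.toLp_apply, Sum.elim_inl] at h
        rw [hconst k] at h
        simpa [Matrix.mulVec, dotProduct, Matrix.mul_apply] using h
      simp [hz] at hpos
    funext k
    rw [hconst k]
    ext a i
    have := congrFun (hcol i) a
    simpa using this
end

section
/- Fix positive integers p, q, N, L and set m = p + q. Let D(k) ∈ ℝ^{L×m}, X'(k) ∈ ℝ^{p×L}, λ_1, …, λ_{N-1} > 0, and f(C) = ½ Σ_{k=0}^{N−1} ‖D(k) C(k) − X'(k)ᵀ‖_F² + ½ Σ_{k=1}^{N−1} λ_k ‖C(k) − C(k−1)‖_F². If Σ_{k=0}^{N−1} D(k)ᵀ D(k) is positive definite, then f is strictly convex on ((ℝ^{m×p})^N. -/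
open Matrix

lemma frobSq_nonneg {α β : Type*} [Fintype α] [Fintype β] (M : Matrix α β ℝ) :
    0 ≤ frobSq M :=
  Finset.sum_nonneg fun _ _ => Finset.sum_nonneg fun _ _ => sq_nonneg _

lemma eq_zero_of_frobSq_eq_zero {α β : Type*} [Fintype α] [Fintype β] {M : Matrix α β ℝ}
    (h : frobSq M = 0) : M = 0 := by
  ext i j
  have h1 := (Finset.sum_eq_zero_iff_of_nonneg
    (fun i _ => Finset.sum_nonneg fun j _ => sq_nonneg (M i j))).mp h i (Finset.mem_univ i)
  have h2 := (Finset.sum_eq_zero_iff_of_nonneg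
    (fun j _ => sq_nonneg (M i j))).mp h1 j (Finset.mem_univ j)
  simpa using pow_eq_zero_iff (n := 2) (by norm_num) |>.mp h2

lemma frobSq_combo {α β : Type*} [Fintype α] [Fintype β] (t : ℝ) (A B : Matrix α β ℝ) :
    frobSq (t • A + (1 - t) • B) =
      t * frobSq A + (1 - t) * frobSq B - t * (1 - t) * frobSq (A - B) := by
  unfold frobSq
  simp only [Finset.mul_sum, ← Finset.sum_sub_distrib, ← Finset.sum_add_distrib]
  refine Finset.sum_congr rfl fun i _ => ?_
  refine Finset.sum_congr rfl fun j _ => ?_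
  simp only [Matrix.add_apply, Matrix.smul_apply, Matrix.sub_apply, smul_eq_mul]
  ring

/-- If `Σ_{k=0}^{N−1} D(k)ᵀ D(k)` is positive definite, then the regularized
least-squares identification cost `f` is strictly convex on `(ℝ^{(p+q)×p})^N`:
`f(tC + (1−t)C') < t f(C) + (1−t) f(C')` for all `C ≠ C'` and `t ∈ (0,1)`. -/
theorem stmt_9 (p q n L : ℕ) (hp : 0 < p) (hq : 0 < q) (hL : 0 < L)
    (D : Fin (n + 1) → Matrix (Fin L) (Fin (p + q)) ℝ)
    (X' : Fin (n + 1) → Matrix (Fin p) (Fin L) ℝ)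
    (lam : Fin n → ℝ) (hlam : ∀ k, 0 < lam k)
    (hpos : (∑ k : Fin (n + 1), (D k)ᵀ * D k).PosDef) :
    ∀ C C' : Fin (n + 1) → Matrix (Fin (p + q)) (Fin p) ℝ, C ≠ C' →
      ∀ t : ℝ, 0 < t → t < 1 →
        cost p q n L D X' lam (t • C + (1 - t) • C') <
          t * cost p q n L D X' lam C + (1 - t) * cost p q n L D X' lam C' := by
  intro C C' hne t ht ht1
  set Δ : Fin (n + 1) → Matrix (Fin (p + q)) (Fin p) ℝ := fun k => C k - C' k with hΔ
  set Q : ℝ := (1 / 2) * ∑ k : Fin (n + 1), frobSq (D k * Δ k) +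
      (1 / 2) * ∑ k : Fin n, lam k * frobSq (Δ k.succ - Δ k.castSucc) with hQdef
  -- key decomposition
  have key1 : ∀ k : Fin (n + 1),
      D k * ((t • C + (1 - t) • C') k) - (X' k)ᵀ =
        t • (D k * C k - (X' k)ᵀ) + (1 - t) • (D k * C' k - (X' k)ᵀ) := by
    intro k
    have : (t • C + (1 - t) • C') k = t • C k + (1 - t) • C' k := rfl
    rw [this, Matrix.mul_add, Matrix.mul_smul, Matrix.mul_smul]
    ext i j
    simp only [Matrix.add_apply, Matrix.sub_apply, Matrix.smul_apply, smul_eq_mul,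
      Matrix.transpose_apply]
    ring
  have key2 : ∀ k : Fin n,
      (t • C + (1 - t) • C') k.succ - (t • C + (1 - t) • C') k.castSucc =
        t • (C k.succ - C k.castSucc) + (1 - t) • (C' k.succ - C' k.castSucc) := by
    intro k
    ext i j
    simp only [Pi.add_apply, Pi.smul_apply, Matrix.add_apply, Matrix.sub_apply,
      Matrix.smul_apply, smul_eq_mul]
    ring
  have keyd1 : ∀ k : Fin (n + 1),
      (D k * C k - (X' k)ᵀ) - (D k * C' k - (X' k)ᵀ) = D k * Δ k := by
    intro k
    rw [hΔ]
    rw [Matrix.mul_sub]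
    abel
  have keyd2 : ∀ k : Fin n,
      (C k.succ - C k.castSucc) - (C' k.succ - C' k.castSucc) =
        Δ k.succ - Δ k.castSucc := by
    intro k
    simp only [hΔ]
    abel
  have hEq : cost p q n L D X' lam (t • C + (1 - t) • C') =
      t * cost p q n L D X' lam C + (1 - t) * cost p q n L D X' lam C' - t * (1 - t) * Q := by
    unfold cost
    have h1 : ∀ k : Fin (n + 1),
        frobSq (D k * ((t • C + (1 - t) • C') k) - (X' k)ᵀ) =
          t * frobSq (D k * C k - (X' k)ᵀ) + (1 - t) * frobSq (D k * C' k - (X' k)ᵀ) -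
            t * (1 - t) * frobSq (D k * Δ k) := by
      intro k
      rw [key1 k, frobSq_combo, keyd1 k]
    have h2 : ∀ k : Fin n,
        frobSq ((t • C + (1 - t) • C') k.succ - (t • C + (1 - t) • C') k.castSucc) =
          t * frobSq (C k.succ - C k.castSucc) + (1 - t) * frobSq (C' k.succ - C' k.castSucc) -
            t * (1 - t) * frobSq (Δ k.succ - Δ k.castSucc) := by
      intro k
      rw [key2 k, frobSq_combo, keyd2 k]
    have h1' : ∀ k : Fin (n + 1),
        frobSq (D k * ((t • C + (1 - t) • C') k) - (X' k)ᵀ) =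
          t * frobSq (D k * C k - (X' k)ᵀ) + (1 - t) * frobSq (D k * C' k - (X' k)ᵀ) -
            t * (1 - t) * frobSq (D k * Δ k) := h1
    have h2' : ∀ k : Fin n,
        lam k * frobSq ((t • C + (1 - t) • C') k.succ - (t • C + (1 - t) • C') k.castSucc) =
          t * (lam k * frobSq (C k.succ - C k.castSucc)) +
            (1 - t) * (lam k * frobSq (C' k.succ - C' k.castSucc)) -
              t * (1 - t) * (lam k * frobSq (Δ k.succ - Δ k.castSucc)) := by
      intro k
      rw [h2 k]; ring
    rw [Finset.sum_congr rfl fun k _ => h1' k, Finset.sum_congr rfl fun k _ => h2' k]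
    rw [hQdef]
    simp only [Finset.sum_sub_distrib, Finset.sum_add_distrib, ← Finset.mul_sum]
    ring
  -- positivity of Q
  have hQpos : 0 < Q := by
    have hS1 : 0 ≤ ∑ k : Fin (n + 1), frobSq (D k * Δ k) :=
      Finset.sum_nonneg fun k _ => frobSq_nonneg _
    have hS2 : 0 ≤ ∑ k : Fin n, lam k * frobSq (Δ k.succ - Δ k.castSucc) :=
      Finset.sum_nonneg fun k _ => mul_nonneg (hlam k).le (frobSq_nonneg _)
    rcases lt_or_eq_of_le (by rw [hQdef]; positivity : (0:ℝ) ≤ Q) with h | h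
    · exact h
    exfalso
    -- Q = 0 : extract vanishing of each term
    have hS1z : ∑ k : Fin (n + 1), frobSq (D k * Δ k) = 0 := by
      rw [hQdef] at h; linarith
    have hS2z : ∑ k : Fin n, lam k * frobSq (Δ k.succ - Δ k.castSucc) = 0 := by
      rw [hQdef] at h; linarith
    have hD0 : ∀ k : Fin (n + 1), D k * Δ k = 0 := by
      intro k
      refine eq_zero_of_frobSq_eq_zero ?_
      exact (Finset.sum_eq_zero_iff_of_nonneg (fun k _ => frobSq_nonneg _)).mp hS1z k
        (Finset.mem_univ k)
    have hstep : ∀ k : Fin n, Δ k.succ = Δ k.castSucc := by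
      intro k
      have := (Finset.sum_eq_zero_iff_of_nonneg
        (fun k _ => mul_nonneg (hlam k).le (frobSq_nonneg _))).mp hS2z k (Finset.mem_univ k)
      have hz : frobSq (Δ k.succ - Δ k.castSucc) = 0 := by
        rcases mul_eq_zero.mp this with h' | h'
        · exact absurd h' (hlam k).ne'
        · exact h'
      have := eq_zero_of_frobSq_eq_zero hz
      exact sub_eq_zero.mp this
    -- Δ is constant
    have hconst : ∀ k : Fin (n + 1), Δ k = Δ 0 := by
      intro k
      induction k using Fin.induction with
      | zero => rfl
      | succ i ih => rw [hstep i]; exact ih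
    -- Δ 0 ≠ 0
    have hΔ0 : Δ 0 ≠ 0 := by
      intro h0
      apply hne
      funext k
      have := hconst k
      rw [h0] at this
      have : C k - C' k = 0 := this
      exact sub_eq_zero.mp this
    -- pick a nonzero column
    obtain ⟨i0, j0, hij⟩ : ∃ i j, Δ 0 i j ≠ 0 := by
      by_contra hcon
      push_neg at hcon
      exact hΔ0 (by ext i j; simpa using hcon i j)
    set x : Fin (p + q) → ℝ := fun i => Δ 0 i j0 with hx
    have hxne : x ≠ 0 := fun h0 => hij (by simpa [hx] using congrFun h0 i0)
    have hcol : ∀ k : Fin (n + 1), D k *ᵥ x = 0 := by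
      intro k
      funext i
      have h1 : D k * Δ 0 = 0 := by rw [← hconst k]; exact hD0 k
      have := congrFun (congrFun h1 i) j0
      simpa [Matrix.mul_apply, Matrix.mulVec, dotProduct, hx] using this
    have hMx : (∑ k : Fin (n + 1), (D k)ᵀ * D k) *ᵥ x = 0 := by
      have hsum : (∑ k : Fin (n + 1), (D k)ᵀ * D k) *ᵥ x =
          ∑ k : Fin (n + 1), ((D k)ᵀ * D k) *ᵥ x := by
        funext i
        simp only [Matrix.mulVec, dotProduct, Matrix.sum_apply, Finset.sum_mul,
          Finset.sum_apply]
        rw [Finset.sum_comm]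
      rw [hsum]
      refine Finset.sum_eq_zero fun k _ => ?_
      rw [← Matrix.mulVec_mulVec, hcol k, Matrix.mulVec_zero]
    have := hpos.dotProduct_mulVec_pos hxne
    rw [hMx] at this
    simp at this
  have hprod : 0 < t * (1 - t) * Q := by
    have : 0 < 1 - t := by linarith
    positivity
  linarith [hEq]
end

section
/- Fix positive integers m, p, N ≥ 1, reals λ_1, …, λ_{N-1}, symmetric m×m matrices S_00, …, S_{N-1,N-1}, and right-hand sides Θ_0, …, Θ_{N-1} ∈ ℝ^{m×p}. Define Λ_0 = S_00 and Λ_k = S_kk − λ_k² Λ_{k−1}^{-1}, and assume each Λ_k is invertible. Define the forward pass Y_0 = Λ_0^{-1} Θ_0, Y_k = Λ_k^{-1}(Θ_k + λ_k Y_{k−1}) for k = 1, …, N−1, and the backward pass C(N−1) = Y_{N−1}, C(k) = Y_k + λ_{k+1} Λ_k^{-1} C(k+1) for k = N−2, …, 0. Then the tuple C = (C(0), …, C(N−1)) satisfies the block tridiagonal system S_kk C(k) − λ_k C(k−1) − λ_{k+1} C(k+1) = Θ_k for all k (with the convention that the terms with C(−1) and C(N) are absent), i.e. 𝒜 C = Θ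 where 𝒜 is the block tridiagonal matrix with diagonal blocks S_kk and off-diagonal blocks −λ_k I. -/
open Matrix

/-- (Correctness of the forward/backward pass of the COSMIC algorithm.)
With symmetric diagonal blocks `S_kk` (`k = 0, …, N−1`, `N = n + 1`), weights
`λ_1, …, λ_{N-1}`, recursively defined `Λ_0 = S_00`, `Λ_k = S_kk − λ_k² Λ_{k−1}⁻¹` (all
invertible), forward pass `Y_0 = Λ_0⁻¹ Θ_0`, `Y_k = Λ_k⁻¹(Θ_k + λ_k Y_{k−1})`, and backward
pass `C(N−1) = Y_{N−1}`, `C(k) = Y_k + λ_{k+1} Λ_k⁻¹ C(k+1)`, the resulting tuple `C`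
satisfies the block tridiagonal system
`S_kk C(k) − λ_k C(k−1) − λ_{k+1} C(k+1) = Θ_k` for all `k`
(with the conventions `λ_0 = λ_N = 0`, so the terms with `C(−1)` and `C(N)` are absent). -/
theorem stmt_14 (m p n : ℕ) (hm : 0 < m) (hp : 0 < p) (lam : Fin n → ℝ)
    (S : Fin (n + 1) → Matrix (Fin m) (Fin m) ℝ) (hS : ∀ k, (S k).IsSymm)
    (Θ : Fin (n + 1) → Matrix (Fin m) (Fin p) ℝ)
    (Lam : Fin (n + 1) → Matrix (Fin m) (Fin m) ℝ)
    (hLam0 : Lam 0 = S 0)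
    (hLamS : ∀ k : Fin n, Lam k.succ = S k.succ - (lam k) ^ 2 • (Lam k.castSucc)⁻¹)
    (hInv : ∀ k, IsUnit (Lam k).det)
    (Y : Fin (n + 1) → Matrix (Fin m) (Fin p) ℝ)
    (hY0 : Y 0 = (Lam 0)⁻¹ * Θ 0)
    (hYs : ∀ k : Fin n, Y k.succ = (Lam k.succ)⁻¹ * (Θ k.succ + lam k • Y k.castSucc))
    (C : Fin (n + 1) → Matrix (Fin m) (Fin p) ℝ)
    (hClast : C (Fin.last n) = Y (Fin.last n))
    (hCs : ∀ k : Fin n, C k.castSucc = Y k.castSucc + lam k • ((Lam k.castSucc)⁻¹ * C k.succ)) :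
    ∀ k : Fin (n + 1),
      S k * C k -
        (if h : 0 < (k : ℕ) then
          lam ⟨(k : ℕ) - 1, by have := k.isLt; omega⟩ •
            C ⟨(k : ℕ) - 1, by have := k.isLt; omega⟩
         else 0) -
        (if h : (k : ℕ) < n then
          lam ⟨(k : ℕ), h⟩ • C ⟨(k : ℕ) + 1, by omega⟩
         else 0) = Θ k := by
  have hmul : ∀ k, Lam k * (Lam k)⁻¹ = 1 := fun k => Matrix.mul_nonsing_inv _ (hInv k)
  -- forward pass identities
  have hY' : ∀ k : Fin n, Lam k.succ * Y k.succ = Θ k.succ + lam k • Y k.castSucc := by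
    intro k
    rw [hYs k, ← Matrix.mul_assoc, hmul, Matrix.one_mul]
  have hY0' : Lam 0 * Y 0 = Θ 0 := by rw [hY0, ← Matrix.mul_assoc, hmul, Matrix.one_mul]
  -- backward pass identity
  have hC' : ∀ k : Fin n, Lam k.castSucc * C k.castSucc
      = Lam k.castSucc * Y k.castSucc + lam k • C k.succ := by
    intro k
    rw [hCs k, Matrix.mul_add, Matrix.mul_smul, ← Matrix.mul_assoc, hmul, Matrix.one_mul]
  -- relation between S and Lam
  have hSC : ∀ k : Fin n, S k.succ * C k.succ - lam k • C k.castSucc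
      = Lam k.succ * C k.succ - lam k • Y k.castSucc := by
    intro k
    have h1 : S k.succ = Lam k.succ + (lam k) ^ 2 • (Lam k.castSucc)⁻¹ := by
      rw [hLamS k]; abel
    rw [h1, Matrix.add_mul, Matrix.smul_mul, hCs k, smul_add, smul_smul, ← pow_two]
    abel
  rintro ⟨i, hi⟩
  rcases Nat.eq_zero_or_pos i with rfl | hpos
  · -- i = 0
    rw [dif_neg (lt_irrefl 0), sub_zero]
    by_cases hn : 0 < n
    · rw [dif_pos hn]
      set j : Fin n := ⟨0, hn⟩ with hj
      show S j.castSucc * C j.castSucc - lam j • C j.succ = Θ j.castSucc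
      have e00 : (0 : Fin (n + 1)) = j.castSucc := rfl
      have hS0 : S j.castSucc = Lam j.castSucc := by rw [← e00, hLam0]
      rw [hS0, hC' j, ← e00, hY0']
      abel
    · rw [dif_neg hn]
      interval_cases n
      show S 0 * C 0 - 0 = Θ 0
      have elast : (0 : Fin 1) = Fin.last 0 := rfl
      rw [← hLam0, sub_zero, elast, hClast, ← elast, hY0']
  · -- i = j + 1
    obtain ⟨j, rfl⟩ : ∃ j, i = j + 1 := ⟨i - 1, by omega⟩
    have hjn : j < n := by omega
    set jn : Fin n := ⟨j, hjn⟩ with hjdef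
    rw [dif_pos (Nat.succ_pos j)]
    by_cases h2 : j + 1 < n
    · rw [dif_pos h2]
      set j' : Fin n := ⟨j + 1, h2⟩ with hj'
      show S jn.succ * C jn.succ - lam jn • C jn.castSucc - lam j' • C j'.succ = Θ jn.succ
      have e3 : jn.succ = j'.castSucc := rfl
      rw [hSC jn, e3, hC' j']
      have hy := hY' jn
      rw [e3] at hy
      rw [hy]
      abel
    · rw [dif_neg h2]
      show S jn.succ * C jn.succ - lam jn • C jn.castSucc - 0 = Θ jn.succ
      have hlast : jn.succ = Fin.last n := by
        ext; simp [hjdef]; omega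
      rw [sub_zero, hSC jn, hlast, hClast, ← hlast, hY' jn]
      abel
end

section
/- Fix positive integers p, q, N, L and set m = p + q. Let D(k) ∈ ℝ^{L×m} with ℓ-th row [x_ℓ(k)ᵀ u_ℓ(k)ᵀ], λ_1, …, λ_{N-1} > 0, V = blockdiag(D(0), …, D(N−1)), F the block forward-difference matrix, Υ = diag(λ_1 I_m, …, λ_{N-1} I_m), and 𝒜 = VᵀV + FᵀΥF. If 𝒜 is singular, then there exists a nonzero vector η̄ = (η̄_A, η̄_B) ∈ ℝ^p × ℝ^q such that x_ℓ(k)ᵀ η̄_A + u_ℓ(k)ᵀ η̄_B = 0 for every ℓ = 1, …, L and every k = 0, …, N−1; in particular, all data rows [x_ℓ(k)ᵀ u_ℓ(k)ᵀ] lie in a common hyperplane of ℝ^{p+q} and no p + q of them are linearly independent. -/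
open Matrix

lemma sum_pm {α : Type*} [Fintype α] [DecidableEq α] (a b : α) (hab : a ≠ b) (g : α → ℝ) :
    ∑ c, (if c = a then (1:ℝ) else if c = b then -1 else 0) * g c = g a - g b := by
  have h : ∀ c, (if c = a then (1:ℝ) else if c = b then -1 else 0) * g c
      = (if c = a then g c else 0) + (if c = b then -g c else 0) := by
    intro c
    by_cases h1 : c = a <;> by_cases h2 : c = b <;> simp_all
  simp [h, Finset.sum_add_distrib, sub_eq_add_neg]

lemma append_dot {p q : ℕ} (a : Fin p → ℝ) (b : Fin q → ℝ) (c : Fin p → ℝ) (d : Fin q → ℝ) :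
    Fin.append a b ⬝ᵥ Fin.append c d = a ⬝ᵥ c + b ⬝ᵥ d := by
  simp [dotProduct, Fin.sum_univ_add]

lemma dot_transpose_mulVec {α β : Type*} [Fintype α] [Fintype β]
    (M : Matrix α β ℝ) (v : β → ℝ) (w : α → ℝ) :
    v ⬝ᵥ (Mᵀ *ᵥ w) = (M *ᵥ v) ⬝ᵥ w := by
  rw [dotProduct_mulVec, vecMul_transpose]

/-- (Contrapositive core of Theorem 2 of the paper.)  If the normal-equation
matrix `𝒜 = VᵀV + FᵀΥF` (with all `λ_k > 0`) is singular, then there is a nonzero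
`η̄ = (η̄_A, η̄_B) ∈ ℝ^p × ℝ^q` with `x_ℓ(k)ᵀ η̄_A + u_ℓ(k)ᵀ η̄_B = 0` for all `ℓ, k`; in
particular all data rows lie in a common hyperplane and no `p + q` of them are linearly
independent. -/
theorem stmt_15 (p q n L : ℕ) (hp : 0 < p) (hq : 0 < q) (hL : 0 < L)
    (x : Fin L → Fin (n + 1) → Fin p → ℝ) (u : Fin L → Fin (n + 1) → Fin q → ℝ)
    (lam : Fin n → ℝ) (hlam : ∀ k, 0 < lam k)
    (hsing : ¬ IsUnit ((Vblk p q n L x u)ᵀ * Vblk p q n L x u +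
      (Fmat n (p + q))ᵀ * Ups n (p + q) lam * Fmat n (p + q))) :
    ∃ (ηA : Fin p → ℝ) (ηB : Fin q → ℝ), ¬(ηA = 0 ∧ ηB = 0) ∧
      (∀ (ℓ : Fin L) (k : Fin (n + 1)), x ℓ k ⬝ᵥ ηA + u ℓ k ⬝ᵥ ηB = 0) ∧
      (∀ sel : Fin (p + q) → Fin L × Fin (n + 1),
        ¬ LinearIndependent ℝ
          (fun j => Fin.append (x (sel j).1 (sel j).2) (u (sel j).1 (sel j).2))) := by
  set V := Vblk p q n L x u with hV
  set F := Fmat n (p + q) with hF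
  set Υ := Ups n (p + q) lam with hΥ
  -- get a null vector
  have hdet : (Vᵀ * V + Fᵀ * Υ * F).det = 0 := by
    by_contra h
    exact hsing ((isUnit_iff_isUnit_det _).mpr (isUnit_iff_ne_zero.mpr h))
  obtain ⟨v, hv0, hAv⟩ := (Matrix.exists_mulVec_eq_zero_iff).mpr hdet
  set a := V *ᵥ v with ha
  set b := F *ᵥ v with hb
  have hUb : Υ *ᵥ b = fun r => lam r.1 * b r := by
    funext r
    simp [hΥ, Ups, mulVec, dotProduct, ite_mul, Finset.sum_ite_eq]
  have hquad : a ⬝ᵥ a + ∑ r, lam r.1 * b r ^ 2 = 0 := by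
    have h0 : v ⬝ᵥ ((Vᵀ * V + Fᵀ * Υ * F) *ᵥ v) = 0 := by rw [hAv]; simp
    rw [add_mulVec, dotProduct_add, ← mulVec_mulVec, dot_transpose_mulVec,
      Matrix.mul_assoc, ← mulVec_mulVec, ← mulVec_mulVec, dot_transpose_mulVec, ← ha, ← hb,
      hUb] at h0
    rw [← h0]
    congr 1
    simp only [dotProduct]
    exact Finset.sum_congr rfl fun r _ => by ring
  -- both pieces vanish
  have haa : a ⬝ᵥ a = 0 ∧ ∀ r, lam r.1 * b r ^ 2 = 0 := by
    have h1 : 0 ≤ a ⬝ᵥ a := by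
      simp only [dotProduct]
      exact Finset.sum_nonneg fun i _ => mul_self_nonneg _
    have h2 : ∀ r ∈ Finset.univ, 0 ≤ lam (Prod.fst r) * b r ^ 2 :=
      fun r _ => mul_nonneg (hlam r.1).le (sq_nonneg _)
    have h3 : 0 ≤ ∑ r, lam r.1 * b r ^ 2 := Finset.sum_nonneg h2
    have h4 : a ⬝ᵥ a = 0 := le_antisymm (by linarith) h1
    have h5 : ∑ r, lam r.1 * b r ^ 2 = 0 := by linarith
    exact ⟨h4, fun r => (Finset.sum_eq_zero_iff_of_nonneg h2).mp h5 r (Finset.mem_univ r)⟩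
  have ha0 : a = 0 := dotProduct_self_eq_zero.mp haa.1
  have hb0 : ∀ r, b r = 0 := by
    intro r
    have := haa.2 r
    have hl := (hlam r.1).ne'
    have : b r ^ 2 = 0 := by
      rcases mul_eq_zero.mp this with h | h
      · exact absurd h hl
      · exact h
    exact pow_eq_zero_iff (by norm_num) |>.mp this
  -- b components give the difference relation
  have hdiff : ∀ (k : Fin n) (j : Fin (p + q)), v (k.succ, j) = v (k.castSucc, j) := by
    intro k j
    have h := hb0 (k, j)
    rw [hb, hF] at h
    have hne : (k.succ : Fin (n + 1)) ≠ k.castSucc := (Fin.castSucc_lt_succ : k.castSucc < k.succ).ne'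
    have : (Fmat n (p + q) *ᵥ v) (k, j)
        = v (k.succ, j) - v (k.castSucc, j) := by
      simp only [Fmat, mulVec, dotProduct, Fintype.sum_prod_type]
      have inner : ∀ k' : Fin (n + 1),
          ∑ j' : Fin (p + q),
            (if k' = k.succ then (1:ℝ) else if k' = k.castSucc then -1 else 0) *
              (if j = j' then (1:ℝ) else 0) * v (k', j')
          = (if k' = k.succ then (1:ℝ) else if k' = k.castSucc then -1 else 0) * v (k', j) := by
        intro k'
        rw [Finset.sum_eq_single j]
        · simp
        · intro j' _ hj'
          simp [Ne.symm hj']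
        · simp
      rw [Finset.sum_congr rfl fun k' _ => inner k']
      exact sum_pm _ _ hne _
    rw [this] at h
    linarith
  have hconst : ∀ (k : Fin (n + 1)) (j : Fin (p + q)), v (k, j) = v (0, j) := by
    intro k j
    induction k using Fin.induction with
    | zero => rfl
    | succ i ih => rw [hdiff i j, ih]
  -- define the candidate
  set ηbar : Fin (p + q) → ℝ := fun j => v (0, j) with hηbar
  set ηA : Fin p → ℝ := fun i => ηbar (Fin.castAdd q i) with hηA
  set ηB : Fin q → ℝ := fun i => ηbar (Fin.natAdd p i) with hηB
  have happ : Fin.append ηA ηB = ηbar := by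
    funext j
    induction j using Fin.addCases with
    | left i => simp [Fin.append_left, hηA]
    | right i => simp [Fin.append_right, hηB]
  -- rows are orthogonal to ηbar
  have hrow : ∀ (ℓ : Fin L) (k : Fin (n + 1)),
      Fin.append (x ℓ k) (u ℓ k) ⬝ᵥ ηbar = 0 := by
    intro ℓ k
    have h := congrFun ha0 (k, ℓ)
    rw [ha, hV] at h
    have : (Vblk p q n L x u *ᵥ v) (k, ℓ)
        = Fin.append (x ℓ k) (u ℓ k) ⬝ᵥ ηbar := by
      simp only [Vblk, mulVec, dotProduct, Fintype.sum_prod_type, Dmat]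
      rw [Finset.sum_eq_single k]
      · refine Finset.sum_congr rfl fun j _ => ?_
        rw [hconst k j]
        simp [hηbar]
      · intro k' _ hk'
        simp [Ne.symm hk']
      · simp
    rw [this] at h
    exact h
  have hmain : ∀ (ℓ : Fin L) (k : Fin (n + 1)), x ℓ k ⬝ᵥ ηA + u ℓ k ⬝ᵥ ηB = 0 := by
    intro ℓ k
    have := hrow ℓ k
    rw [← happ, append_dot] at this
    exact this
  -- ηbar ≠ 0
  have hηne : ηbar ≠ 0 := by
    intro h0
    apply hv0
    funext r
    rw [hconst r.1 r.2]
    exact congrFun h0 r.2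
  refine ⟨ηA, ηB, ?_, hmain, ?_⟩
  · rintro ⟨hA0, hB0⟩
    apply hηne
    rw [← happ, hA0, hB0]
    funext j
    induction j using Fin.addCases with
    | left i => simp [Fin.append_left]
    | right i => simp [Fin.append_right]
  · intro sel hli
    have hcard : Fintype.card (Fin (p + q)) = Module.finrank ℝ (Fin (p + q) → ℝ) := by
      simp [Module.finrank_fin_fun]
    have hpq : 0 < p + q := Nat.add_pos_left hp q
    haveI : Nonempty (Fin (p + q)) := ⟨⟨0, hpq⟩⟩
    let B := basisOfLinearIndependentOfCardEqFinrank hli hcard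
    have hBspan : Submodule.span ℝ (Set.range
        (fun j => Fin.append (x (sel j).1 (sel j).2) (u (sel j).1 (sel j).2))) = ⊤ := by
      have := B.span_eq
      rwa [coe_basisOfLinearIndependentOfCardEqFinrank] at this
    have hmem : ηbar ∈ Submodule.span ℝ (Set.range
        (fun j => Fin.append (x (sel j).1 (sel j).2) (u (sel j).1 (sel j).2))) := by
      rw [hBspan]; trivial
    have horth : ∀ y ∈ Submodule.span ℝ (Set.range
        (fun j => Fin.append (x (sel j).1 (sel j).2) (u (sel j).1 (sel j).2))),
        y ⬝ᵥ ηbar = 0 := by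
      intro y hy
      induction hy using Submodule.span_induction with
      | mem z hz =>
        obtain ⟨j, rfl⟩ := hz
        exact hrow (sel j).1 (sel j).2
      | zero => simp
      | add y z _ _ hy hz => rw [add_dotProduct, hy, hz, add_zero]
      | smul c y _ hy => rw [smul_dotProduct, hy, smul_zero]
    exact hηne (dotProduct_self_eq_zero.mp (horth ηbar hmem))
end
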